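/- Let G be a finite group and ρ : G →* Matrix (Fin n) (Fin n) ℂ an irreducible unitary representation. Then the map ρ† : Matrix (Fin n) (Fin n) ℂ → MonoidAlgebra ℂ G defined by ρ†(M) = ∑_{g ∈ G} (trace (ρ(g)ᴴ * M)) • (MonoidAlgebra.single g 1) is injective. -/

import Mathlib

open Matrix BigOperators

/-- A matrix representation is unitary if every `ρ g` is a unitary matrix. -/
def IsUnitaryRep {G : Type*} [Group G] {n : ℕ}
    (ρ : G →* Matrix (Fin n) (Fin n) ℂ) : Prop :=
  ∀ g : G, (ρ g)ᴴ * ρ g = 1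

/-- A matrix representation is irreducible if the only subspaces of `ℂⁿ`
invariant under every `ρ g` are the zero subspace and the whole space. -/
def IsIrreducibleRep {G : Type*} [Group G] {n : ℕ}
    (ρ : G →* Matrix (Fin n) (Fin n) ℂ) : Prop :=
  ∀ W : Submodule ℂ (Fin n → ℂ),
    (∀ g : G, ∀ v ∈ W, (ρ g).mulVec v ∈ W) → W = ⊥ ∨ W = ⊤

/-- The adjoint `ρ†` of the linear extension of `ρ` to the group algebra:
`ρ†(M) = ∑ g, trace(ρ(g)ᴴ * M) • single g 1`. -/
noncomputable def rhoDag {G : Type*} [Group G] [Fintype G] {n : ℕ}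
    (ρ : G →* Matrix (Fin n) (Fin n) ℂ)
    (M : Matrix (Fin n) (Fin n) ℂ) : MonoidAlgebra ℂ G :=
  ∑ g : G, (Matrix.trace ((ρ g)ᴴ * M)) • MonoidAlgebra.single g (1 : ℂ)

section Aux

variable {G : Type*} [Group G] [Fintype G] {n : ℕ}
  (ρ : G →* Matrix (Fin n) (Fin n) ℂ)

lemma rho_conjTranspose (hu : IsUnitaryRep ρ) (g : G) : (ρ g)ᴴ = ρ g⁻¹ := by
  have h2 : ρ g * ρ g⁻¹ = 1 := by rw [← _root_.map_mul, mul_inv_cancel, _root_.map_one]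
  calc (ρ g)ᴴ = (ρ g)ᴴ * (ρ g * ρ g⁻¹) := by rw [h2, mul_one]
    _ = ((ρ g)ᴴ * ρ g) * ρ g⁻¹ := by rw [mul_assoc]
    _ = ρ g⁻¹ := by rw [hu g, one_mul]

lemma schur_lemma (hi : IsIrreducibleRep ρ) (hn : 0 < n)
    (T : Matrix (Fin n) (Fin n) ℂ) (hT : ∀ g : G, ρ g * T = T * ρ g) :
    ∃ c : ℂ, T = c • 1 := by
  haveI : Nonempty (Fin n) := ⟨⟨0, hn⟩⟩
  set f : Module.End ℂ (Fin n → ℂ) := Matrix.toLin' T with hf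
  obtain ⟨c, hc⟩ := Module.End.exists_eigenvalue f
  refine ⟨c, ?_⟩
  have hinv : ∀ g : G, ∀ v ∈ Module.End.eigenspace f c,
      (ρ g).mulVec v ∈ Module.End.eigenspace f c := by
    intro g v hv
    rw [Module.End.mem_eigenspace_iff] at hv ⊢
    have hv' : T.mulVec v = c • v := by simpa [hf, Matrix.toLin'_apply] using hv
    calc f ((ρ g).mulVec v) = (T * ρ g).mulVec v := by
            simp [hf, Matrix.toLin'_apply, Matrix.mulVec_mulVec]
      _ = (ρ g * T).mulVec v := by rw [hT]
      _ = (ρ g).mulVec (T.mulVec v) := by rw [Matrix.mulVec_mulVec]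
      _ = (ρ g).mulVec (c • v) := by rw [hv']
      _ = c • (ρ g).mulVec v := by rw [Matrix.mulVec_smul]
  have hW : Module.End.eigenspace f c = ⊤ := by
    rcases hi (Module.End.eigenspace f c) hinv with h | h
    · exact absurd h hc
    · exact h
  apply (Matrix.toLin' : Matrix (Fin n) (Fin n) ℂ ≃ₗ[ℂ] _).injective
  apply LinearMap.ext
  intro v
  have hv : v ∈ Module.End.eigenspace f c := hW ▸ Submodule.mem_top
  rw [Module.End.mem_eigenspace_iff] at hv
  simpa [hf, Matrix.toLin'_apply, Matrix.smul_mulVec] using hv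

lemma conj_avg (hi : IsIrreducibleRep ρ) (hn : 0 < n)
    (X : Matrix (Fin n) (Fin n) ℂ) :
    ∑ g : G, ρ g * X * ρ g⁻¹ = ((Fintype.card G : ℂ) * Matrix.trace X / n) • 1 := by
  set T : Matrix (Fin n) (Fin n) ℂ := ∑ g : G, ρ g * X * ρ g⁻¹ with hTdef
  have hcomm : ∀ h : G, ρ h * T = T * ρ h := by
    intro h
    rw [hTdef, Finset.mul_sum, Finset.sum_mul]
    refine Fintype.sum_equiv (Equiv.mulLeft h) _ _ (fun g => ?_)
    have h1 : ρ h * (ρ g * X * ρ g⁻¹) = ρ (h * g) * X * (ρ (h * g)⁻¹ * ρ h) := by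
      have e1 : ρ (h * g) = ρ h * ρ g := _root_.map_mul ρ h g
      have e2 : ρ (h * g)⁻¹ * ρ h = ρ g⁻¹ := by
        rw [← _root_.map_mul]; congr 1; group
      rw [e1, e2]; simp only [mul_assoc]
    simpa only [Equiv.coe_mulLeft, mul_assoc] using h1
  obtain ⟨c, hc⟩ := schur_lemma ρ hi hn T hcomm
  have htr : Matrix.trace T = (Fintype.card G : ℂ) * Matrix.trace X := by
    rw [hTdef, Matrix.trace_sum]
    have : ∀ g : G, Matrix.trace (ρ g * X * ρ g⁻¹) = Matrix.trace X := by
      intro g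
      rw [Matrix.trace_mul_cycle]
      have : ρ g⁻¹ * (ρ g * X) = X := by
        rw [← mul_assoc, ← _root_.map_mul, inv_mul_cancel, _root_.map_one, one_mul]
      rw [mul_assoc, this]
    simp [this, Finset.sum_const]
  have htrc : Matrix.trace ((c : ℂ) • (1 : Matrix (Fin n) (Fin n) ℂ)) = c * n := by
    simp [Matrix.trace_smul, Matrix.trace_one, mul_comm]
  rw [hc]
  congr 1
  have hn' : (n : ℂ) ≠ 0 := Nat.cast_ne_zero.mpr hn.ne'
  have hcn : c * n = (Fintype.card G : ℂ) * Matrix.trace X := by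
    rw [← htrc, ← hc, htr]
  rw [eq_div_iff hn']
  exact hcn

/-- Schur orthogonality for matrix entries. -/
lemma orth (hi : IsIrreducibleRep ρ) (hn : 0 < n) (a b k i : Fin n) :
    ∑ g : G, ρ g k a * ρ g⁻¹ b i
      = ((Fintype.card G : ℂ) / n) * (if a = b then 1 else 0) * (if k = i then 1 else 0) := by
  have h := conj_avg ρ hi hn (Matrix.single a b (1:ℂ))
  have h2 := congrArg (fun M : Matrix (Fin n) (Fin n) ℂ => M k i) h
  simp only [Matrix.sum_apply] at h2
  have hl : ∀ g : G, (ρ g * Matrix.single a b (1:ℂ) * ρ g⁻¹) k i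
      = ρ g k a * ρ g⁻¹ b i := by
    intro g
    simp [Matrix.mul_apply, Matrix.single, Matrix.of_apply, mul_ite, ite_mul,
      mul_zero, zero_mul, mul_one, ite_and, Finset.sum_ite_eq, Finset.sum_ite_eq',
      Finset.mul_sum, Finset.sum_mul]
  rw [Finset.sum_congr rfl (fun g _ => hl g)] at h2
  have htrE : Matrix.trace (Matrix.single a b (1:ℂ)) = if a = b then 1 else 0 := by
    by_cases hab : a = b
    · subst hab; simp
    · simp [Matrix.trace_single_eq_of_ne a b (1:ℂ) hab, hab]
  rw [h2, htrE]
  simp only [Matrix.smul_apply, Matrix.one_apply, smul_eq_mul]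
  split_ifs <;> ring

end Aux

theorem stmt8 {G : Type*} [Group G] [Fintype G] {n : ℕ}
    (ρ : G →* Matrix (Fin n) (Fin n) ℂ)
    (hu : IsUnitaryRep ρ) (hi : IsIrreducibleRep ρ) :
    Function.Injective (rhoDag ρ) := by
  rcases Nat.eq_zero_or_pos n with hn | hn
  · subst hn
    intro M N _
    ext i j
    exact absurd i.2 (by simp)
  intro M N hMN
  -- coefficients agree
  have hcoef : ∀ g : G, Matrix.trace ((ρ g)ᴴ * M) = Matrix.trace ((ρ g)ᴴ * N) := by
    intro g
    have := congrArg (fun f : MonoidAlgebra ℂ G => f.coeff g) hMN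
    classical
    simp only [rhoDag, MonoidAlgebra.smul_single'] at this
    rw [MonoidAlgebra.coeff_sum, MonoidAlgebra.coeff_sum, Finsupp.finset_sum_apply, Finsupp.finset_sum_apply] at this
    simpa [MonoidAlgebra.coeff_single, Finsupp.single_apply, Finset.sum_ite_eq'] using this
  have hD : ∀ g : G, Matrix.trace (ρ g⁻¹ * (M - N)) = 0 := by
    intro g
    rw [Matrix.mul_sub, Matrix.trace_sub, ← rho_conjTranspose ρ hu, hcoef g, sub_self]
  have key : ∀ k l : Fin n,
      ∑ g : G, Matrix.trace (ρ g⁻¹ * (M - N)) * ρ g k l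
        = ((Fintype.card G : ℂ) / n) * (M - N) k l := by
    intro k l
    have : ∀ g : G, Matrix.trace (ρ g⁻¹ * (M - N)) * ρ g k l
        = ∑ i : Fin n, ∑ j : Fin n, (M - N) j i * (ρ g k l * ρ g⁻¹ i j) := by
      intro g
      simp only [Matrix.trace, Matrix.diag, Matrix.mul_apply, Finset.sum_mul]
      exact Finset.sum_congr rfl fun i _ => Finset.sum_congr rfl fun j _ => by ring
    rw [Finset.sum_congr rfl (fun g _ => this g), Finset.sum_comm]
    have h2 : ∀ i : Fin n, ∑ g : G, ∑ j : Fin n, (M - N) j i * (ρ g k l * ρ g⁻¹ i j)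
        = ∑ j : Fin n, (M - N) j i *
            (((Fintype.card G : ℂ) / n) * (if l = i then 1 else 0) * (if k = j then 1 else 0)) := by
      intro i
      rw [Finset.sum_comm]
      refine Finset.sum_congr rfl (fun j _ => ?_)
      rw [← Finset.mul_sum, orth ρ hi hn l i k j]
    rw [Finset.sum_congr rfl (fun i _ => h2 i)]
    simp [Finset.sum_ite_eq', mul_comm]
  have hzero : ∀ k l : Fin n, ((Fintype.card G : ℂ) / n) * (M - N) k l = 0 := by
    intro k l
    rw [← key k l]
    simp [hD]
  have hcard : ((Fintype.card G : ℂ) / n) ≠ 0 := by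
    apply div_ne_zero
    · exact_mod_cast Fintype.card_ne_zero
    · exact_mod_cast hn.ne'
  have : M - N = 0 := by
    ext k l
    have := hzero k l
    rcases mul_eq_zero.mp this with h | h
    · exact absurd h hcard
    · simpa using h
  have := sub_eq_zero.mp this
  exact this
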